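/- Fix an integer k ≥ 1. If a : ℕ → ℝ is a Stieltjes moment sequence, then for every t ∈ ℕ the t-fold iterate (L_k)^t(a) is a Stieltjes moment sequence; in particular every term of (L_k)^t(a) is nonnegative. -/

import Mathlib

open MeasureTheory

/-- `a` is a Stieltjes moment sequence: `a 0 ≥ 0` and there is a Borel probability
measure on `ℝ` supported on `[0, ∞)` with all moments finite such that
`a n = a 0 * ∫ x ^ n ∂μ` for all `n`. -/
def IsSM (a : ℕ → ℝ) : Prop :=
  0 ≤ a 0 ∧ ∃ μ : Measure ℝ, IsProbabilityMeasure μ ∧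
    μ (Set.Iio (0 : ℝ)) = 0 ∧
    (∀ n : ℕ, Integrable (fun x => x ^ n) μ) ∧
    (∀ n : ℕ, a n = a 0 * ∫ x, x ^ n ∂μ)

/-- The operator `L_k`: `L_k(a)(n) = det (a (n+i+j))_{0 ≤ i,j ≤ k-1}`. -/
def Lk (k : ℕ) (a : ℕ → ℝ) : ℕ → ℝ :=
  fun n => Matrix.det (Matrix.of fun i j : Fin k => a (n + (i : ℕ) + (j : ℕ)))

open Equiv Finset
open scoped ENNReal NNReal

private lemma expand_sq (k n : ℕ) (x : Fin k → ℝ) :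
    ∑ σ : Equiv.Perm (Fin k), ∑ τ : Equiv.Perm (Fin k),
      (((Equiv.Perm.sign σ : ℤ) : ℝ) * ((Equiv.Perm.sign τ : ℤ) : ℝ)) *
        ∏ i, x i ^ (n + (σ i : ℕ) + (τ i : ℕ))
    = (∏ i, x i ^ n) *
      (∑ σ : Equiv.Perm (Fin k), ((Equiv.Perm.sign σ : ℤ) : ℝ) * ∏ i, x i ^ (σ i : ℕ)) ^ 2 := by
  rw [sq, Finset.sum_mul_sum, Finset.mul_sum]
  refine Finset.sum_congr rfl fun σ _ => ?_
  rw [Finset.mul_sum]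
  refine Finset.sum_congr rfl fun τ _ => ?_
  have : ∏ i, x i ^ (n + (σ i : ℕ) + (τ i : ℕ))
      = (∏ i, x i ^ n) * ((∏ i, x i ^ (σ i : ℕ)) * ∏ i, x i ^ (τ i : ℕ)) := by
    simp_rw [pow_add, Finset.prod_mul_distrib]
    ring
  rw [this]; ring

private lemma double_sum_det (k n : ℕ) (m : ℕ → ℝ) :
    ∑ σ : Equiv.Perm (Fin k), ∑ τ : Equiv.Perm (Fin k),
      (((Equiv.Perm.sign σ : ℤ) : ℝ) * ((Equiv.Perm.sign τ : ℤ) : ℝ)) *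
        ∏ i, m (n + (σ i : ℕ) + (τ i : ℕ))
    = (Nat.factorial k : ℝ) * Lk k m n := by
  have h1 : ∀ τ : Equiv.Perm (Fin k),
      ∑ σ : Equiv.Perm (Fin k), (((Equiv.Perm.sign σ : ℤ) : ℝ) * ((Equiv.Perm.sign τ : ℤ) : ℝ)) *
        ∏ i, m (n + (σ i : ℕ) + (τ i : ℕ)) = Lk k m n := by
    intro τ
    set F : Equiv.Perm (Fin k) → ℝ := fun π =>
      ((Equiv.Perm.sign π : ℤ) : ℝ) * ∏ i, m (n + (π i : ℕ) + (i : ℕ)) with hF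
    have h2 : ∀ σ : Equiv.Perm (Fin k),
        (((Equiv.Perm.sign σ : ℤ) : ℝ) * ((Equiv.Perm.sign τ : ℤ) : ℝ)) *
          ∏ i, m (n + (σ i : ℕ) + (τ i : ℕ)) = F ((Equiv.mulRight τ⁻¹) σ) := by
      intro σ
      have hprod : ∏ i, m (n + (σ i : ℕ) + (τ i : ℕ))
          = ∏ i, m (n + ((σ * τ⁻¹) i : ℕ) + (i : ℕ)) := by
        rw [← Equiv.prod_comp τ (fun i => m (n + ((σ * τ⁻¹) i : ℕ) + (i : ℕ)))]
        refine Finset.prod_congr rfl fun i _ => ?_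
        simp [Equiv.Perm.mul_apply]
      have hsign : Equiv.Perm.sign (σ * τ⁻¹) = Equiv.Perm.sign σ * Equiv.Perm.sign τ := by
        rw [map_mul, map_inv, Int.units_inv_eq_self]
      simp only [hF, Equiv.coe_mulRight, hsign, Units.val_mul, Int.cast_mul, hprod]
    calc ∑ σ : Equiv.Perm (Fin k),
          (((Equiv.Perm.sign σ : ℤ) : ℝ) * ((Equiv.Perm.sign τ : ℤ) : ℝ)) *
            ∏ i, m (n + (σ i : ℕ) + (τ i : ℕ))
        = ∑ π : Equiv.Perm (Fin k), F π :=
          Fintype.sum_equiv (Equiv.mulRight τ⁻¹) _ F h2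
      _ = Lk k m n := by
          rw [Lk, Matrix.det_apply']
          simp [hF, Matrix.of_apply]
  calc ∑ σ : Equiv.Perm (Fin k), ∑ τ : Equiv.Perm (Fin k),
        (((Equiv.Perm.sign σ : ℤ) : ℝ) * ((Equiv.Perm.sign τ : ℤ) : ℝ)) *
          ∏ i, m (n + (σ i : ℕ) + (τ i : ℕ))
      = ∑ τ : Equiv.Perm (Fin k), ∑ σ : Equiv.Perm (Fin k),
        (((Equiv.Perm.sign σ : ℤ) : ℝ) * ((Equiv.Perm.sign τ : ℤ) : ℝ)) *
          ∏ i, m (n + (σ i : ℕ) + (τ i : ℕ)) := Finset.sum_comm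
    _ = ∑ _τ : Equiv.Perm (Fin k), Lk k m n := Finset.sum_congr rfl fun τ _ => h1 τ
    _ = (Nat.factorial k : ℝ) * Lk k m n := by
        rw [Finset.sum_const, Finset.card_univ, Fintype.card_perm, Fintype.card_fin, nsmul_eq_mul]

private lemma pi_integrable {X : Type*} [MeasurableSpace X] {k : ℕ} {μ : Measure X}
    [SigmaFinite μ] {f : Fin k → X → ℝ} (hf : ∀ i, Integrable (f i) μ) :
    Integrable (fun x : Fin k → X => ∏ i, f i (x i)) (Measure.pi fun _ => μ) := by
  letI : MeasureSpace X := ⟨μ⟩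
  exact Integrable.fintype_prod hf

private lemma pi_integral {X : Type*} [MeasurableSpace X] {k : ℕ} {μ : Measure X}
    [SigmaFinite μ] (f : Fin k → X → ℝ) :
    ∫ x : Fin k → X, ∏ i, f i (x i) ∂(Measure.pi fun _ => μ) = ∏ i, ∫ x, f i x ∂μ := by
  letI : MeasureSpace X := ⟨μ⟩
  exact MeasureTheory.integral_fintype_prod_eq_prod f

private lemma sm_nonneg {a : ℕ → ℝ} (ha : IsSM a) (n : ℕ) : 0 ≤ a n := by
  obtain ⟨hc, μ, hp, h0, hint, hrep⟩ := ha
  rw [hrep n]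
  refine mul_nonneg hc (integral_nonneg_of_ae ?_)
  have hx : ∀ᵐ x ∂μ, (0:ℝ) ≤ x := by
    rw [ae_iff]
    simp only [not_le]; exact h0
  filter_upwards [hx] with x hx
  exact pow_nonneg hx n

private lemma key (k : ℕ) {a : ℕ → ℝ} (ha : IsSM a) : IsSM (Lk k a) := by
  classical
  obtain ⟨hc, μ, hp, h0, hint, hrep⟩ := ha
  set m : ℕ → ℝ := fun n => ∫ x, x ^ n ∂μ with hm
  set c : ℝ := a 0 with hcdef
  set P : Measure (Fin k → ℝ) := Measure.pi (fun _ => μ) with hP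
  set G : ℕ → (Fin k → ℝ) → ℝ := fun n x => ((Nat.factorial k : ℝ))⁻¹ *
    ∑ σ : Equiv.Perm (Fin k), ∑ τ : Equiv.Perm (Fin k),
      (((Equiv.Perm.sign σ : ℤ) : ℝ) * ((Equiv.Perm.sign τ : ℤ) : ℝ)) *
        ∏ i, x i ^ (n + (σ i : ℕ) + (τ i : ℕ)) with hG
  have hfacpos : (0:ℝ) < (Nat.factorial k : ℝ) := by positivity
  -- integrability of G n
  have hGint : ∀ n, Integrable (G n) P := by
    intro n
    refine Integrable.const_mul ?_ _
    refine integrable_finset_sum _ fun σ _ => integrable_finset_sum _ fun τ _ => ?_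
    exact (pi_integrable (f := fun i t => t ^ (n + (σ i : ℕ) + (τ i : ℕ)))
      fun i => hint _).const_mul _
  -- value of ∫ G n
  have hGval : ∀ n, ∫ x, G n x ∂P = Lk k m n := by
    intro n
    rw [hG]
    simp only
    rw [integral_const_mul,
      integral_finset_sum _ (fun σ _ => integrable_finset_sum _ fun τ _ =>
        (pi_integrable (f := fun i t => t ^ (n + (σ i : ℕ) + (τ i : ℕ)))
          fun i => hint _).const_mul _)]
    have : ∀ σ : Equiv.Perm (Fin k),
        ∫ x, ∑ τ : Equiv.Perm (Fin k),
          (((Equiv.Perm.sign σ : ℤ) : ℝ) * ((Equiv.Perm.sign τ : ℤ) : ℝ)) *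
            ∏ i, x i ^ (n + (σ i : ℕ) + (τ i : ℕ)) ∂P
        = ∑ τ : Equiv.Perm (Fin k),
          (((Equiv.Perm.sign σ : ℤ) : ℝ) * ((Equiv.Perm.sign τ : ℤ) : ℝ)) *
            ∏ i, m (n + (σ i : ℕ) + (τ i : ℕ)) := by
      intro σ
      rw [integral_finset_sum _ (fun τ _ =>
        (pi_integrable (f := fun i t => t ^ (n + (σ i : ℕ) + (τ i : ℕ)))
          fun i => hint _).const_mul _)]
      refine Finset.sum_congr rfl fun τ _ => ?_
      rw [integral_const_mul, pi_integral (fun i t => t ^ (n + (σ i : ℕ) + (τ i : ℕ)))]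
    rw [Finset.sum_congr rfl fun σ _ => this σ, double_sum_det]
    field_simp
  -- pointwise structure of G
  have hGmul : ∀ n x, G n x = (∏ i, x i ^ n) * G 0 x := by
    intro n x
    rw [hG]
    simp only
    rw [expand_sq k n x, expand_sq k 0 x]
    simp only [pow_zero, Finset.prod_const_one, one_mul]
    ring
  have hG0nn : ∀ x, 0 ≤ G 0 x := by
    intro x
    rw [hG]
    simp only
    rw [expand_sq k 0 x]
    simp only [pow_zero, Finset.prod_const_one, one_mul]
    positivity
  set Z : ℝ := Lk k m 0 with hZdef
  have hZint : ∫ x, G 0 x ∂P = Z := hGval 0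
  have hZnn : 0 ≤ Z := by
    rw [← hZint]
    exact integral_nonneg hG0nn
  have hLka : ∀ n, Lk k a n = c ^ k * Lk k m n := by
    intro n
    have hmat : (Matrix.of fun i j : Fin k => a (n + (i : ℕ) + (j : ℕ)))
        = c • (Matrix.of fun i j : Fin k => m (n + (i : ℕ) + (j : ℕ))) := by
      ext i j
      simp [Matrix.smul_apply, hrep (n + (i : ℕ) + (j : ℕ)), hm, smul_eq_mul]
    rw [Lk]
    rw [hmat, Matrix.det_smul]
    simp [Fintype.card_fin, Lk]
  rcases eq_or_lt_of_le hZnn with hZ0 | hZpos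
  · -- degenerate case: Z = 0, everything vanishes
    have hw0 : G 0 =ᵐ[P] 0 :=
      (integral_eq_zero_iff_of_nonneg_ae (Filter.Eventually.of_forall hG0nn) (hGint 0)).1
        (hZint.trans hZ0.symm)
    have hLm : ∀ n, Lk k m n = 0 := by
      intro n
      rw [← hGval n]
      have hGn0 : G n =ᵐ[P] 0 := by
        filter_upwards [hw0] with x hx
        simp only [Pi.zero_apply] at hx ⊢
        rw [hGmul n x, hx, mul_zero]
      rw [integral_congr_ae hGn0]
      simp
    have hall : ∀ n, Lk k a n = 0 := fun n => by rw [hLka n, hLm n, mul_zero]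
    refine ⟨by rw [hall 0], Measure.dirac 0, inferInstance, ?_, ?_, ?_⟩
    · simp [Measure.dirac_apply' _ measurableSet_Iio]
    · intro n
      refine ⟨(measurable_id'.pow_const n).aestronglyMeasurable, ?_⟩
      simp only [HasFiniteIntegral, lintegral_dirac]
      exact ENNReal.coe_lt_top
    · intro n
      rw [hall n, hall 0, zero_mul]
  · -- main case: Z > 0
    have hwmeas : Measurable (G 0) := by
      rw [hG]
      refine Measurable.const_mul ?_ _
      refine Finset.measurable_sum _ fun σ _ => Finset.measurable_sum _ fun τ _ => ?_
      exact (Finset.measurable_prod _ fun i _ =>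
        (measurable_pi_apply i).pow_const _).const_mul _
    have hdens : Measurable fun x : Fin k → ℝ => Real.toNNReal (G 0 x) :=
      hwmeas.real_toNNReal
    set ρ : Measure (Fin k → ℝ) :=
      P.withDensity (fun x => (Real.toNNReal (G 0 x) : ℝ≥0∞)) with hρ
    have hρuniv : ρ Set.univ = ENNReal.ofReal Z := by
      rw [hρ, withDensity_apply _ MeasurableSet.univ, setLIntegral_univ]
      have h := ofReal_integral_eq_lintegral_ofReal (hGint 0)
        (Filter.Eventually.of_forall hG0nn)
      calc ∫⁻ x, (Real.toNNReal (G 0 x) : ℝ≥0∞) ∂P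
          = ∫⁻ x, ENNReal.ofReal (G 0 x) ∂P := rfl
        _ = ENNReal.ofReal (∫ x, G 0 x ∂P) := h.symm
        _ = ENNReal.ofReal Z := by rw [hZint]
    have hZE0 : ENNReal.ofReal Z ≠ 0 := (ENNReal.ofReal_pos.2 hZpos).ne'
    have hZET : ENNReal.ofReal Z ≠ ⊤ := ENNReal.ofReal_ne_top
    have hpm : Measurable (fun x : Fin k → ℝ => ∏ i, x i) :=
      Finset.measurable_prod _ fun i _ => measurable_pi_apply i
    set ν : Measure ℝ :=
      Measure.map (fun x : Fin k → ℝ => ∏ i, x i) ((ENNReal.ofReal Z)⁻¹ • ρ) with hν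
    have hprob : IsProbabilityMeasure ν := by
      constructor
      rw [hν, Measure.map_apply hpm MeasurableSet.univ, Set.preimage_univ,
        Measure.smul_apply, hρuniv, smul_eq_mul, ENNReal.inv_mul_cancel hZE0 hZET]
    have hIio : ν (Set.Iio (0:ℝ)) = 0 := by
      rw [hν, Measure.map_apply hpm measurableSet_Iio, Measure.smul_apply]
      have hPnull : P ((fun x : Fin k → ℝ => ∏ i, x i) ⁻¹' Set.Iio 0) = 0 := by
        have hsub : ((fun x : Fin k → ℝ => ∏ i, x i) ⁻¹' Set.Iio 0)
            ⊆ ⋃ i : Fin k, (Function.eval i) ⁻¹' (Set.Iio (0:ℝ)) := by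
          intro x hx
          simp only [Set.mem_preimage, Set.mem_Iio] at hx
          by_contra hcon
          simp only [Set.mem_iUnion, Set.mem_preimage, Set.mem_Iio, Function.eval,
            not_exists, not_lt] at hcon
          exact absurd (Finset.prod_nonneg fun i _ => hcon i) (not_le.2 hx)
        refine measure_mono_null hsub (measure_iUnion_null fun i => ?_)
        exact Measure.pi_eval_preimage_null (μ := fun _ : Fin k => μ) h0
      have : ρ ((fun x : Fin k → ℝ => ∏ i, x i) ⁻¹' Set.Iio 0) = 0 :=
        (withDensity_absolutelyContinuous P _) hPnull
      rw [this, smul_zero]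
    have hsmul_eq : ∀ n, (fun x : Fin k → ℝ =>
        (Real.toNNReal (G 0 x)) • (∏ i, x i) ^ n) = G n := by
      intro n
      funext x
      have h1 : (Real.toNNReal (G 0 x) : ℝ) = G 0 x := Real.coe_toNNReal _ (hG0nn x)
      calc (Real.toNNReal (G 0 x)) • (∏ i, x i) ^ n
          = G 0 x * (∏ i, x i) ^ n := by rw [NNReal.smul_def, h1, smul_eq_mul]
        _ = (∏ i, x i ^ n) * G 0 x := by rw [← Finset.prod_pow]; ring
        _ = G n x := (hGmul n x).symm
    have hintν : ∀ n : ℕ, Integrable (fun y : ℝ => y ^ n) ν := by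
      intro n
      rw [hν, integrable_map_measure (measurable_id'.pow_const n).aestronglyMeasurable
        hpm.aemeasurable]
      refine Integrable.smul_measure ?_ (by simp [hZE0])
      have : ((fun y : ℝ => y ^ n) ∘ fun x : Fin k → ℝ => ∏ i, x i)
          = fun x : Fin k → ℝ => (∏ i, x i) ^ n := rfl
      rw [this, hρ, integrable_withDensity_iff_integrable_smul hdens, hsmul_eq n]
      exact hGint n
    have hmom : ∀ n : ℕ, ∫ y, y ^ n ∂ν = Z⁻¹ * Lk k m n := by
      intro n
      rw [hν, integral_map hpm.aemeasurable
        ((measurable_id'.pow_const n).aestronglyMeasurable (μ := ν))]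
      rw [integral_smul_measure, hρ, integral_withDensity_eq_integral_smul hdens]
      rw [hsmul_eq n, hGval n]
      rw [ENNReal.toReal_inv, ENNReal.toReal_ofReal hZnn, smul_eq_mul]
    refine ⟨?_, ν, hprob, hIio, hintν, ?_⟩
    · rw [hLka 0]
      exact mul_nonneg (pow_nonneg hc k) hZnn
    · intro n
      rw [hLka n, hLka 0, hmom n]
      calc c ^ k * Lk k m n = c ^ k * Lk k m n * (Z * Z⁻¹) := by
            rw [mul_inv_cancel₀ hZpos.ne', mul_one]
        _ = c ^ k * Z * (Z⁻¹ * Lk k m n) := by ring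

/-- If `a` is a Stieltjes moment sequence, then for every `t` the `t`-fold iterate
`(L_k)^[t] a` is a Stieltjes moment sequence; in particular all its terms are
nonnegative. -/
theorem stmt2 (k : ℕ) (hk : 1 ≤ k) (a : ℕ → ℝ) (ha : IsSM a) :
    ∀ t : ℕ, IsSM ((Lk k)^[t] a) ∧ ∀ n : ℕ, 0 ≤ (Lk k)^[t] a n := by
  intro t
  induction t with
  | zero => exact ⟨ha, fun n => sm_nonneg ha n⟩
  | succ t ih =>
      rw [Function.iterate_succ_apply']
      have h := key k ih.1
      exact ⟨h, fun n => sm_nonneg h n⟩
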